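/- Let G = Γ(𝔽_p[x]/(x^{2b+1})), b ≥ 1, with partition V_1,…,V_{2b} by minimal degree, and W_i the space of functions supported on V_i with sum zero. For 0 ≤ α ≤ 1, every nonzero vector of W_i is an eigenvector of A_α(G) = αD(G)+(1−α)A(G), with eigenvalue α(p^i − 1) if 1 ≤ i ≤ b, and with eigenvalue α(p^i − 1) − 1 if b+1 ≤ i ≤ 2b. -/

import Mathlib

open Polynomial

noncomputable section

/-- The truncated polynomial ring `𝔽_p[x]/(x^c)`. -/
abbrev TPR (p c : ℕ) : Type := AdjoinRoot (X ^ c : (ZMod p)[X])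

instance (p c : ℕ) [Fact p.Prime] : Finite (TPR p c) := by
  have hb : PowerBasis (ZMod p) (TPR p c) :=
    AdjoinRoot.powerBasis (pow_ne_zero c Polynomial.X_ne_zero)
  have : Module.Finite (ZMod p) (TPR p c) := Module.Finite.of_basis hb.basis
  exact Module.finite_of_finite (ZMod p)

/-- The canonical representative (the unique representative of degree `< c`)
of an element of `𝔽_p[x]/(x^c)`. -/
def canon {p c : ℕ} (f : TPR p c) : (ZMod p)[X] :=
  Function.surjInv (AdjoinRoot.mk_surjective (g := (X ^ c : (ZMod p)[X]))) f %ₘ X ^ c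

/-- The minimal degree: the least exponent with nonzero coefficient in the
canonical representative. -/
def mindeg {p c : ℕ} (f : TPR p c) : ℕ := (canon f).natTrailingDegree

/-- The set of nonzero zero-divisors of `𝔽_p[x]/(x^c)`. -/
def zd (p c : ℕ) : Set (TPR p c) := {f | f ≠ 0 ∧ ∃ g, g ≠ 0 ∧ f * g = 0}

/-- The zero-divisor graph of `𝔽_p[x]/(x^c)`: vertices are the nonzero
zero-divisors, and `f ~ g` iff `f ≠ g` and `f * g = 0`. -/
def zdGraph (p c : ℕ) : SimpleGraph (zd p c) where
  Adj a b := a ≠ b ∧ (a : TPR p c) * (b : TPR p c) = 0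
  symm := ⟨fun a b h => ⟨h.1.symm, by rw [mul_comm]; exact h.2⟩⟩
  loopless := ⟨fun a h => h.1 rfl⟩

noncomputable instance (p c : ℕ) [Fact p.Prime] : Fintype (zd p c) := Fintype.ofFinite _

open scoped Classical in
/-- The adjacency matrix of the zero-divisor graph, over `ℝ`. -/
def adjM (p c : ℕ) : Matrix (zd p c) (zd p c) ℝ :=
  Matrix.of fun a b => if (zdGraph p c).Adj a b then 1 else 0

open scoped Classical in
/-- The diagonal degree matrix of the zero-divisor graph, over `ℝ`. -/
def degM (p c : ℕ) : Matrix (zd p c) (zd p c) ℝ :=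
  Matrix.diagonal fun v => (((zdGraph p c).neighborSet v).ncard : ℝ)

section Aux

variable {p c : ℕ} [Fact p.Prime]

lemma canon_mk (g : (ZMod p)[X]) :
    canon (AdjoinRoot.mk (X ^ c) g : TPR p c) = g %ₘ X ^ c := by
  unfold canon
  apply Polynomial.modByMonic_eq_of_dvd_sub (monic_X_pow c)
  rw [← AdjoinRoot.mk_eq_mk]
  exact Function.surjInv_eq (AdjoinRoot.mk_surjective (g := (X ^ c : (ZMod p)[X]))) _

lemma mk_canon (f : TPR p c) : AdjoinRoot.mk (X ^ c) (canon f) = f := by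
  unfold canon
  set h := Function.surjInv (AdjoinRoot.mk_surjective (g := (X ^ c : (ZMod p)[X]))) f with hh
  have h1 : AdjoinRoot.mk (X ^ c) h = f :=
    Function.surjInv_eq (AdjoinRoot.mk_surjective (g := (X ^ c : (ZMod p)[X]))) f
  rw [← h1]
  rw [AdjoinRoot.mk_eq_mk]
  exact ⟨- (h /ₘ X ^ c), by linear_combination Polynomial.modByMonic_add_div h (X ^ c)⟩

lemma canon_zero : canon (0 : TPR p c) = 0 := by
  have : (0 : TPR p c) = AdjoinRoot.mk (X ^ c) 0 := by simp
  rw [this, canon_mk, Polynomial.zero_modByMonic]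

lemma canon_eq_zero_iff {f : TPR p c} : canon f = 0 ↔ f = 0 := by
  constructor
  · intro h
    have := mk_canon f
    rw [h] at this
    simpa using this.symm
  · rintro rfl; exact canon_zero

lemma degree_canon_lt (hc : 0 < c) (f : TPR p c) : (canon f).degree < c := by
  have := Polynomial.degree_modByMonic_lt
    (Function.surjInv (AdjoinRoot.mk_surjective (g := (X ^ c : (ZMod p)[X]))) f)
    (monic_X_pow (R := ZMod p) c)
  rw [Polynomial.degree_X_pow] at this
  exact this

lemma mindeg_lt {f : TPR p c} (hc : 0 < c) (hf : f ≠ 0) : mindeg f < c := by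
  have h0 : canon f ≠ 0 := fun h => hf (canon_eq_zero_iff.mp h)
  have h1 : (canon f).natDegree < c :=
    (Polynomial.natDegree_lt_iff_degree_lt h0).mpr (degree_canon_lt hc f)
  exact lt_of_le_of_lt (Polynomial.natTrailingDegree_le_natDegree _) h1

lemma X_pow_dvd_iff_le_natTrailingDegree {R : Type*} [Semiring R] {h : R[X]} (hh : h ≠ 0) (n : ℕ) :
    X ^ n ∣ h ↔ n ≤ h.natTrailingDegree := by
  rw [Polynomial.X_pow_dvd_iff]
  constructor
  · intro H
    exact Polynomial.le_natTrailingDegree hh H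
  · intro H d hd
    exact Polynomial.coeff_eq_zero_of_lt_natTrailingDegree (lt_of_lt_of_le hd H)

lemma mul_eq_zero_iff_mindeg {f g : TPR p c} (hf : f ≠ 0) (hg : g ≠ 0) :
    f * g = 0 ↔ c ≤ mindeg f + mindeg g := by
  have hcf : canon f ≠ 0 := fun h => hf (canon_eq_zero_iff.mp h)
  have hcg : canon g ≠ 0 := fun h => hg (canon_eq_zero_iff.mp h)
  have h1 : f * g = AdjoinRoot.mk (X ^ c) (canon f * canon g) := by
    rw [map_mul, mk_canon, mk_canon]
  rw [h1, AdjoinRoot.mk_eq_zero,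
    X_pow_dvd_iff_le_natTrailingDegree (mul_ne_zero hcf hcg),
    Polynomial.natTrailingDegree_mul hcf hcg]
  rfl

lemma mindeg_mk_X_pow {k : ℕ} (hk : k < c) :
    mindeg (AdjoinRoot.mk (X ^ c) (X ^ k) : TPR p c) = k := by
  unfold mindeg
  rw [canon_mk, (Polynomial.modByMonic_eq_self_iff (monic_X_pow c)).mpr,
    Polynomial.natTrailingDegree_X_pow]
  rw [Polynomial.degree_X_pow, Polynomial.degree_X_pow]
  exact_mod_cast hk

lemma mk_X_pow_ne_zero {k : ℕ} (hk : k < c) :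
    (AdjoinRoot.mk (X ^ c) (X ^ k) : TPR p c) ≠ 0 := by
  rw [Ne, AdjoinRoot.mk_eq_zero]
  intro h
  have h2 := Polynomial.natDegree_le_of_dvd h (pow_ne_zero k (Polynomial.X_ne_zero (R := ZMod p)))
  rw [Polynomial.natDegree_X_pow, Polynomial.natDegree_X_pow] at h2
  omega

lemma mem_zd_iff (hc : 2 ≤ c) {f : TPR p c} :
    f ∈ zd p c ↔ f ≠ 0 ∧ 1 ≤ mindeg f := by
  constructor
  · rintro ⟨hf, g, hg, hfg⟩
    refine ⟨hf, ?_⟩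
    have h1 := (mul_eq_zero_iff_mindeg hf hg).mp hfg
    have h2 : mindeg g < c := mindeg_lt (by omega) hg
    omega
  · rintro ⟨hf, hm⟩
    refine ⟨hf, AdjoinRoot.mk (X ^ c) (X ^ (c - 1)), mk_X_pow_ne_zero (by omega), ?_⟩
    rw [mul_eq_zero_iff_mindeg hf (mk_X_pow_ne_zero (by omega)), mindeg_mk_X_pow (by omega)]
    omega

lemma ncard_Amind (m : ℕ) (hc : 0 < c) (hm : m ≤ c) :
    ({f : TPR p c | f ≠ 0 ∧ m ≤ mindeg f}).ncard = p ^ (c - m) - 1 := by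
  set φ : Polynomial.degreeLT (ZMod p) (c - m) → TPR p c :=
    fun Q => AdjoinRoot.mk (X ^ c) (X ^ m * (Q : (ZMod p)[X])) with hφ
  have hXc : (X ^ c : (ZMod p)[X]) = X ^ m * X ^ (c - m) := by
    rw [← pow_add]; congr 1; omega
  have hXm : (X ^ m : (ZMod p)[X]) ≠ 0 := pow_ne_zero m Polynomial.X_ne_zero
  have hinj : Function.Injective φ := by
    intro Q1 Q2 h
    rw [hφ] at h
    simp only at h
    rw [AdjoinRoot.mk_eq_mk, ← mul_sub, hXc, mul_dvd_mul_iff_left hXm] at h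
    have hd : (Q1 : (ZMod p)[X]) - Q2 = 0 := by
      by_contra hne
      have h1 := Polynomial.natDegree_le_of_dvd h hne
      rw [Polynomial.natDegree_X_pow] at h1
      have h2 : ((Q1 : (ZMod p)[X]) - Q2).degree < (c - m : ℕ) :=
        Polynomial.mem_degreeLT.mp (Submodule.sub_mem _ Q1.2 Q2.2)
      have h3 := (Polynomial.natDegree_lt_iff_degree_lt hne).mpr h2
      omega
    exact Subtype.ext (sub_eq_zero.mp hd)
  have hrange : Set.range φ = insert 0 {f : TPR p c | f ≠ 0 ∧ m ≤ mindeg f} := by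
    ext f
    constructor
    · rintro ⟨Q, rfl⟩
      by_cases hQ0 : (Q : (ZMod p)[X]) = 0
      · left
        rw [hφ]; simp only [hQ0, mul_zero, map_zero]
      · right
        have hdQ : (Q : (ZMod p)[X]).natDegree < c - m :=
          (Polynomial.natDegree_lt_iff_degree_lt hQ0).mpr (Polynomial.mem_degreeLT.mp Q.2)
        have hmul0 : (X ^ m * (Q : (ZMod p)[X])) ≠ 0 := mul_ne_zero hXm hQ0
      -- φ Q ≠ 0
        have hne : φ Q ≠ 0 := by
          rw [hφ]; simp only [Ne, AdjoinRoot.mk_eq_zero]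
          intro h
          rw [hXc, mul_dvd_mul_iff_left hXm] at h
          have h1 := Polynomial.natDegree_le_of_dvd h hQ0
          rw [Polynomial.natDegree_X_pow] at h1
          omega
        refine ⟨hne, ?_⟩
        have hdeg : (X ^ m * (Q : (ZMod p)[X])).degree < (X ^ c : (ZMod p)[X]).degree := by
          rw [Polynomial.degree_X_pow]
          refine (Polynomial.natDegree_lt_iff_degree_lt hmul0).mp ?_
          rw [Polynomial.natDegree_mul hXm hQ0, Polynomial.natDegree_X_pow]
          omega
        have : mindeg (φ Q) = m + (Q : (ZMod p)[X]).natTrailingDegree := by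
          rw [hφ]
          show (canon _).natTrailingDegree = _
          rw [canon_mk, (Polynomial.modByMonic_eq_self_iff (monic_X_pow c)).mpr hdeg,
            Polynomial.natTrailingDegree_mul hXm hQ0, Polynomial.natTrailingDegree_X_pow]
        omega
    · intro hf
      rcases hf with rfl | ⟨hf0, hfm⟩
      · exact ⟨⟨0, Submodule.zero_mem _⟩, by rw [hφ]; simp⟩
      · have hcf : canon f ≠ 0 := fun h => hf0 (canon_eq_zero_iff.mp h)
        have hdvd : X ^ m ∣ canon f :=
          (X_pow_dvd_iff_le_natTrailingDegree hcf m).mpr hfm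
        obtain ⟨P, hP⟩ := hdvd
        have hP0 : P ≠ 0 := by rintro rfl; rw [mul_zero] at hP; exact hcf hP
        have hdc : (canon f).natDegree < c := by
          refine (Polynomial.natDegree_lt_iff_degree_lt hcf).mpr ?_
          have := degree_canon_lt (by omega : 0 < c) f
          exact_mod_cast this
        have hPd : P.natDegree < c - m := by
          have : (canon f).natDegree = m + P.natDegree := by
            rw [hP, Polynomial.natDegree_mul hXm hP0, Polynomial.natDegree_X_pow]
          omega
        refine ⟨⟨P, Polynomial.mem_degreeLT.mpr ((Polynomial.natDegree_lt_iff_degree_lt hP0).mp hPd)⟩, ?_⟩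
        rw [hφ]
        simp only
        rw [← hP, mk_canon]
  have hcard : (Set.range φ).ncard = p ^ (c - m) := by
    rw [← Nat.card_coe_set_eq, Nat.card_range_of_injective hinj]
    rw [Nat.card_congr (Polynomial.degreeLTEquiv (ZMod p) (c - m)).toEquiv]
    rw [Nat.card_fun]
    simp [Nat.card_eq_fintype_card, ZMod.card]
  rw [hrange] at hcard
  rw [Set.ncard_insert_of_notMem (by simp) (Set.toFinite _)] at hcard
  omega

lemma neighbor_image (hc : 2 ≤ c) (u : zd p c) :
    (Subtype.val '' ((zdGraph p c).neighborSet u)) =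
      {g : TPR p c | g ≠ 0 ∧ c - mindeg (u : TPR p c) ≤ mindeg g} \ {(u : TPR p c)} := by
  have hu0 : (u : TPR p c) ≠ 0 := u.2.1
  have hum : 1 ≤ mindeg (u : TPR p c) := ((mem_zd_iff hc).mp u.2).2
  have hult : mindeg (u : TPR p c) < c := mindeg_lt (by omega) hu0
  ext g
  constructor
  · rintro ⟨v, hv, rfl⟩
    obtain ⟨hne, hmul⟩ := hv
    have hv0 : (v : TPR p c) ≠ 0 := v.2.1
    have := (mul_eq_zero_iff_mindeg hu0 hv0).mp hmul
    refine ⟨⟨hv0, by omega⟩, ?_⟩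
    simp only [Set.mem_singleton_iff]
    intro h
    exact hne (Subtype.ext h.symm)
  · rintro ⟨⟨hg0, hgm⟩, hgu⟩
    simp only [Set.mem_singleton_iff] at hgu
    have hgzd : g ∈ zd p c := (mem_zd_iff hc).mpr ⟨hg0, by omega⟩
    refine ⟨⟨g, hgzd⟩, ⟨?_, ?_⟩, rfl⟩
    · intro h
      exact hgu (congrArg Subtype.val h).symm
    · exact (mul_eq_zero_iff_mindeg hu0 hg0).mpr (by omega)

lemma degree_low (hc : 2 ≤ c) (u : zd p c) (h2 : 2 * mindeg (u : TPR p c) < c) :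
    ((zdGraph p c).neighborSet u).ncard = p ^ (mindeg (u : TPR p c)) - 1 := by
  have hu0 : (u : TPR p c) ≠ 0 := u.2.1
  have hult : mindeg (u : TPR p c) < c := mindeg_lt (by omega) hu0
  rw [← Set.ncard_image_of_injective _ (Subtype.val_injective), neighbor_image hc u]
  rw [Set.diff_singleton_eq_self (by
    simp only [Set.mem_setOf_eq, not_and]
    intro _
    omega)]
  rw [ncard_Amind _ (by omega) (by omega)]
  congr 2
  omega

lemma degree_high (hc : 2 ≤ c) (u : zd p c) (h2 : c ≤ 2 * mindeg (u : TPR p c)) :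
    ((zdGraph p c).neighborSet u).ncard = p ^ (mindeg (u : TPR p c)) - 2 := by
  have hu0 : (u : TPR p c) ≠ 0 := u.2.1
  have hult : mindeg (u : TPR p c) < c := mindeg_lt (by omega) hu0
  rw [← Set.ncard_image_of_injective _ (Subtype.val_injective), neighbor_image hc u]
  rw [Set.ncard_diff_singleton_of_mem (by exact ⟨hu0, by omega⟩)]
  rw [ncard_Amind _ (by omega) (by omega)]
  have : c - (c - mindeg (u : TPR p c)) = mindeg (u : TPR p c) := by omega
  rw [this]
  omega

end Aux

open scoped Classical in
/-- For `G = Γ(𝔽_p[x]/(x^(2b+1)))` and `0 ≤ α ≤ 1`, vectors supported on `V_i`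
with coordinate sum zero are eigenvectors of `A_α(G) = αD(G) + (1-α)A(G)`, with
eigenvalue `α(p^i - 1)` for `1 ≤ i ≤ b` and `α(p^i - 1) - 1` for `b+1 ≤ i ≤ 2b`. -/
theorem stmt_16 (p b : ℕ) [Fact p.Prime] (hb : 1 ≤ b)
    (α : ℝ) (hα0 : 0 ≤ α) (hα1 : α ≤ 1) (i : ℕ)
    (x : zd p (2 * b + 1) → ℝ)
    (hsupp : ∀ v : zd p (2 * b + 1), x v ≠ 0 → mindeg (v : TPR p (2 * b + 1)) = i)
    (hsum : ∑ v ∈ Finset.univ.filter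
        (fun v : zd p (2 * b + 1) => mindeg (v : TPR p (2 * b + 1)) = i), x v = 0) :
    (1 ≤ i → i ≤ b →
      (α • degM p (2 * b + 1) + (1 - α) • adjM p (2 * b + 1)).mulVec x =
        (α * ((p : ℝ) ^ i - 1)) • x) ∧
    (b + 1 ≤ i → i ≤ 2 * b →
      (α • degM p (2 * b + 1) + (1 - α) • adjM p (2 * b + 1)).mulVec x =
        (α * ((p : ℝ) ^ i - 1) - 1) • x) := by
  have hadj : ∀ u v : zd p (2 * b + 1), (zdGraph p (2 * b + 1)).Adj u v ↔
      (u ≠ v ∧ 2 * b + 1 ≤ mindeg (u : TPR p (2 * b + 1)) + mindeg (v : TPR p (2 * b + 1))) := by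
    intro u v
    constructor
    · rintro ⟨h1, h2⟩; exact ⟨h1, (mul_eq_zero_iff_mindeg u.2.1 v.2.1).mp h2⟩
    · rintro ⟨h1, h2⟩; exact ⟨h1, (mul_eq_zero_iff_mindeg u.2.1 v.2.1).mpr h2⟩
  have hx0 : ∀ u : zd p (2 * b + 1), mindeg (u : TPR p (2 * b + 1)) ≠ i → x u = 0 := by
    intro u h
    by_contra hx
    exact h (hsupp u hx)
  have hT : ∀ u : zd p (2 * b + 1),
      (∑ v, (if (zdGraph p (2 * b + 1)).Adj u v then (1 : ℝ) else 0) * x v) =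
        (if 2 * b + 1 ≤ mindeg (u : TPR p (2 * b + 1)) + i then -x u else 0) := by
    intro u
    have step1 : (∑ v, (if (zdGraph p (2 * b + 1)).Adj u v then (1 : ℝ) else 0) * x v)
        = ∑ v ∈ Finset.univ.filter (fun v => (zdGraph p (2 * b + 1)).Adj u v), x v := by
      rw [Finset.sum_filter]
      apply Finset.sum_congr rfl
      intro v _
      split <;> simp
    rw [step1]
    have step2 : (∑ v ∈ Finset.univ.filter (fun v => (zdGraph p (2 * b + 1)).Adj u v), x v)
        = ∑ v ∈ Finset.univ.filter (fun v => (zdGraph p (2 * b + 1)).Adj u v ∧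
            mindeg (v : TPR p (2 * b + 1)) = i), x v := by
      symm
      apply Finset.sum_subset
      · intro v hv
        simp only [Finset.mem_filter, Finset.mem_univ, true_and] at hv ⊢
        exact hv.1
      · intro v hv hnv
        simp only [Finset.mem_filter, Finset.mem_univ, true_and] at hv hnv
        exact hx0 v (fun h => hnv ⟨hv, h⟩)
    rw [step2]
    by_cases hcase : 2 * b + 1 ≤ mindeg (u : TPR p (2 * b + 1)) + i
    · rw [if_pos hcase]
      have hfe : Finset.univ.filter (fun v => (zdGraph p (2 * b + 1)).Adj u v ∧
            mindeg (v : TPR p (2 * b + 1)) = i)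
          = (Finset.univ.filter
              (fun v : zd p (2 * b + 1) => mindeg (v : TPR p (2 * b + 1)) = i)).erase u := by
        ext v
        simp only [Finset.mem_filter, Finset.mem_erase, Finset.mem_univ, true_and, hadj]
        constructor
        · rintro ⟨⟨h1, _⟩, h3⟩; exact ⟨fun h => h1 h.symm, h3⟩
        · rintro ⟨h1, h2⟩; exact ⟨⟨fun h => h1 h.symm, by rw [h2]; exact hcase⟩, h2⟩
      rw [hfe]
      by_cases hu : u ∈ Finset.univ.filter
          (fun v : zd p (2 * b + 1) => mindeg (v : TPR p (2 * b + 1)) = i)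
      · have := Finset.sum_erase_add _ x hu
        rw [hsum] at this
        linarith
      · rw [Finset.erase_eq_of_notMem hu, hsum,
          hx0 u (by simpa using hu)]
        exact neg_zero.symm
    · rw [if_neg hcase]
      have : Finset.univ.filter (fun v => (zdGraph p (2 * b + 1)).Adj u v ∧
            mindeg (v : TPR p (2 * b + 1)) = i) = ∅ := by
        ext v
        simp only [Finset.mem_filter, Finset.mem_univ, true_and, Finset.notMem_empty,
          iff_false, hadj]
        rintro ⟨⟨_, h2⟩, h3⟩
        omega
      rw [this, Finset.sum_empty]
  have hMV : ∀ u, (α • degM p (2 * b + 1) + (1 - α) • adjM p (2 * b + 1)).mulVec x u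
      = α * ((((zdGraph p (2 * b + 1)).neighborSet u).ncard : ℝ)) * x u
        + (1 - α) * (if 2 * b + 1 ≤ mindeg (u : TPR p (2 * b + 1)) + i then -x u else 0) := by
    intro u
    rw [Matrix.add_mulVec, Matrix.smul_mulVec, Matrix.smul_mulVec]
    simp only [Pi.add_apply, Pi.smul_apply, smul_eq_mul]
    congr 1
    · rw [degM, Matrix.mulVec_diagonal]
      ring
    · rw [← hT u]
      congr 1
  have hp2 : 2 ≤ p := (Fact.out (p := p.Prime)).two_le
  constructor
  · intro hi1 hib
    funext u
    rw [hMV u, Pi.smul_apply, smul_eq_mul]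
    by_cases hxu : x u = 0
    · have hz : (if 2 * b + 1 ≤ mindeg (u : TPR p (2 * b + 1)) + i then -x u else 0) = 0 := by
        split <;> simp [hxu]
      rw [hz, hxu]
      ring
    · have hmu : mindeg (u : TPR p (2 * b + 1)) = i := hsupp u hxu
      have hneg : ¬ (2 * b + 1 ≤ mindeg (u : TPR p (2 * b + 1)) + i) := by omega
      rw [if_neg hneg, degree_low (by omega) u (by omega), hmu]
      have h1 : 1 ≤ p ^ i := Nat.one_le_pow _ _ (by omega)
      rw [Nat.cast_sub h1]
      push_cast
      ring
  · intro hi1 hib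
    funext u
    rw [hMV u, Pi.smul_apply, smul_eq_mul]
    by_cases hxu : x u = 0
    · have hz : (if 2 * b + 1 ≤ mindeg (u : TPR p (2 * b + 1)) + i then -x u else 0) = 0 := by
        split <;> simp [hxu]
      rw [hz, hxu]
      ring
    · have hmu : mindeg (u : TPR p (2 * b + 1)) = i := hsupp u hxu
      have hpos : 2 * b + 1 ≤ mindeg (u : TPR p (2 * b + 1)) + i := by omega
      rw [if_pos hpos, degree_high (by omega) u (by omega), hmu]
      have h2 : 2 ≤ p ^ i := by
        calc 2 ≤ p := hp2
        _ = p ^ 1 := (pow_one p).symm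
        _ ≤ p ^ i := Nat.pow_le_pow_right (by omega) (by omega)
      rw [Nat.cast_sub h2]
      push_cast
      ring
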